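/- Let n, d ≥ 1, let S ⊆ F_2^n be nonempty, and let f : S → F_2 be any function. Then the probability that a uniformly random multilinear polynomial p of total degree ≤ d on n variables satisfies p|_S ≡ f is at most 2^{−h_S(d, F_2)}, where h_S(d, F_2) is the Hilbert function of S. -/

import Mathlib

/-- The (affine) Hilbert function of a set `S ⊆ F^n`. -/
noncomputable def hilbertFn (F : Type) [Field F] {n : ℕ} (d : ℕ) (S : Set (Fin n → F)) : ℕ :=
  Module.finrank F (Submodule.span F
    {f : S → F | ∃ p : MvPolynomial (Fin n) F, p.totalDegree ≤ d ∧
      ∀ s : S, MvPolynomial.eval (s : Fin n → F) p = f s})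

open MvPolynomial

/-- Multilinearization of a polynomial over `ZMod 2`. -/
noncomputable def mlin {n : ℕ} (p : MvPolynomial (Fin n) (ZMod 2)) :
    MvPolynomial (Fin n) (ZMod 2) :=
  ∑ m ∈ p.support, monomial (m.mapRange (fun k => min k 1) (by simp)) (p.coeff m)

lemma zmod2_pow_min (x : ZMod 2) (k : ℕ) : x ^ min k 1 = x ^ k := by
  rcases k with _ | k
  · rfl
  · have hx : x = 0 ∨ x = 1 := by revert x; decide
    rcases hx with h | h <;> simp [h, min_eq_right (Nat.succ_le_succ (Nat.zero_le k)),
      pow_succ, zero_pow]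

lemma eval_mlin {n : ℕ} (p : MvPolynomial (Fin n) (ZMod 2)) (x : Fin n → ZMod 2) :
    eval x (mlin p) = eval x p := by
  rw [mlin, map_sum, eval_eq]
  refine Finset.sum_congr rfl fun m hm => ?_
  rw [eval_monomial]
  congr 1
  rw [Finsupp.prod_of_support_subset _ (Finsupp.support_mapRange) _ (by simp)]
  refine Finset.prod_congr rfl fun i _ => ?_
  rw [Finsupp.mapRange_apply, zmod2_pow_min]

lemma totalDegree_mlin {n : ℕ} (p : MvPolynomial (Fin n) (ZMod 2)) :
    (mlin p).totalDegree ≤ p.totalDegree := by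
  refine totalDegree_finsetSum_le fun m hm => ?_
  refine (totalDegree_monomial_le _ _).trans ?_
  refine le_trans ?_ (le_totalDegree hm)
  rw [Finsupp.sum_of_support_subset _ (Finsupp.support_mapRange) _ (by simp),
    Finsupp.sum]
  exact Finset.sum_le_sum fun i _ => by simp [Finsupp.mapRange_apply, min_le_left]

lemma degreeOf_mlin {n : ℕ} (p : MvPolynomial (Fin n) (ZMod 2)) (i : Fin n) :
    (mlin p).degreeOf i ≤ 1 := by
  rw [degreeOf_le_iff]
  intro m hm
  have := MvPolynomial.support_sum hm
  simp only [Finset.mem_biUnion] at this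
  obtain ⟨a, ha, hma⟩ := this
  have := support_monomial_subset hma
  simp only [Finset.mem_singleton] at this
  subst this
  simp [Finsupp.mapRange_apply]

theorem stmt16 (n d : ℕ) (hn : 1 ≤ n) (hd : 1 ≤ d)
    (S : Set (Fin n → ZMod 2)) (hS : S.Nonempty) (f : S → ZMod 2) :
    Set.ncard {p : MvPolynomial (Fin n) (ZMod 2) |
        (p.totalDegree ≤ d ∧ ∀ i, p.degreeOf i ≤ 1) ∧
        ∀ x : S, MvPolynomial.eval (x : Fin n → ZMod 2) p = f x}
      * 2 ^ hilbertFn (ZMod 2) d S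
    ≤ Set.ncard {p : MvPolynomial (Fin n) (ZMod 2) |
        p.totalDegree ≤ d ∧ ∀ i, p.degreeOf i ≤ 1} := by
  classical
  -- the submodule of multilinear polynomials of total degree ≤ d
  set V : Submodule (ZMod 2) (MvPolynomial (Fin n) (ZMod 2)) :=
    restrictTotalDegree (Fin n) (ZMod 2) d ⊓ restrictDegree (Fin n) (ZMod 2) 1 with hV
  have hmemV : ∀ p : MvPolynomial (Fin n) (ZMod 2),
      p ∈ V ↔ p.totalDegree ≤ d ∧ ∀ i, p.degreeOf i ≤ 1 := by
    intro p
    rw [hV, Submodule.mem_inf, mem_restrictTotalDegree, mem_restrictDegree]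
    constructor
    · rintro ⟨h1, h2⟩
      exact ⟨h1, fun i => degreeOf_le_iff.mpr fun m hm => h2 m hm i⟩
    · rintro ⟨h1, h2⟩
      exact ⟨h1, fun m hm i => degreeOf_le_iff.mp (h2 i) m hm⟩
  have hVfd : FiniteDimensional (ZMod 2) V :=
    Submodule.finiteDimensional_of_le (inf_le_left (b := restrictDegree (Fin n) (ZMod 2) 1))
  have hVfin : Finite V := Module.finite_of_finite (ZMod 2)
  -- evaluation linear map
  let E : MvPolynomial (Fin n) (ZMod 2) →ₗ[(ZMod 2)] (S → ZMod 2) :=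
    { toFun := fun p s => eval (s : Fin n → ZMod 2) p
      map_add' := by intro p q; funext s; simp
      map_smul' := by intro c p; funext s; simp }
  let L : V →ₗ[(ZMod 2)] (S → ZMod 2) := E.comp V.subtype
  -- the span in the Hilbert function equals the range of L
  have hspan : Submodule.span (ZMod 2)
      {g : S → (ZMod 2) | ∃ p : MvPolynomial (Fin n) (ZMod 2), p.totalDegree ≤ d ∧
        ∀ s : S, eval (s : Fin n → ZMod 2) p = g s} = LinearMap.range L := by
    apply le_antisymm
    · rw [Submodule.span_le]
      rintro g ⟨p, hp, hpg⟩
      refine ⟨⟨mlin p, (hmemV _).mpr ⟨(totalDegree_mlin p).trans hp, degreeOf_mlin p⟩⟩, ?_⟩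
      funext s
      show eval (s : Fin n → ZMod 2) (mlin p) = g s
      rw [eval_mlin]; exact hpg s
    · rintro g ⟨v, rfl⟩
      exact Submodule.subset_span ⟨v.1, ((hmemV _).mp v.2).1, fun s => rfl⟩
  have hh : hilbertFn (ZMod 2) d S = Module.finrank (ZMod 2) (LinearMap.range L) := by
    rw [hilbertFn, hspan]
  -- identify the two sets
  have hT : {p : MvPolynomial (Fin n) (ZMod 2) |
      p.totalDegree ≤ d ∧ ∀ i, p.degreeOf i ≤ 1} = (V : Set (MvPolynomial (Fin n) (ZMod 2))) := by
    ext p; exact ((hmemV p).symm)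
  have hA : {p : MvPolynomial (Fin n) (ZMod 2) |
        (p.totalDegree ≤ d ∧ ∀ i, p.degreeOf i ≤ 1) ∧
        ∀ x : S, eval (x : Fin n → ZMod 2) p = f x}
      = Subtype.val '' {v : V | L v = f} := by
    ext p
    constructor
    · rintro ⟨h1, h2⟩
      exact ⟨⟨p, (hmemV p).mpr h1⟩, funext h2, rfl⟩
    · rintro ⟨v, hv, rfl⟩
      exact ⟨(hmemV _).mp v.2, fun x => congrFun hv x⟩
  rw [hA, hT, hh]
  rw [Set.ncard_image_of_injective _ Subtype.val_injective]
  have hcard : ∀ (W : Type) [AddCommGroup W] [Module (ZMod 2) W] [FiniteDimensional (ZMod 2) W],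
      Nat.card W = 2 ^ Module.finrank (ZMod 2) W := by
    intro W _ _ _
    have : Finite W := Module.finite_of_finite (ZMod 2)
    have : Fintype W := Fintype.ofFinite W
    rw [Nat.card_eq_fintype_card, Module.card_eq_pow_finrank (K := ZMod 2), ZMod.card]
  -- the fiber injects into the kernel
  have hfib : Set.ncard {v : V | L v = f} ≤ Nat.card (LinearMap.ker L) := by
    rw [← Nat.card_coe_set_eq]
    rcases Set.eq_empty_or_nonempty {v : V | L v = f} with he | ⟨v₀, hv₀⟩
    · rw [he, Nat.card_coe_set_eq, Set.ncard_empty]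
      exact Nat.zero_le _
    · have : Finite (LinearMap.ker L) := Subtype.finite
      refine Nat.card_le_card_of_injective
        (fun v => (⟨v.1 - v₀, ?_⟩ : LinearMap.ker L)) ?_
      · rw [LinearMap.mem_ker, map_sub, v.2, hv₀, sub_self]
      · intro a b hab
        have := congrArg Subtype.val hab
        simp only [Subtype.mk.injEq, sub_left_inj] at this
        exact Subtype.ext this
  have hkr := LinearMap.finrank_range_add_finrank_ker L
  calc Set.ncard {v : V | L v = f} * 2 ^ Module.finrank (ZMod 2) (LinearMap.range L)
      ≤ Nat.card (LinearMap.ker L) * 2 ^ Module.finrank (ZMod 2) (LinearMap.range L) :=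
        Nat.mul_le_mul_right _ hfib
    _ = 2 ^ Module.finrank (ZMod 2) (LinearMap.ker L) * 2 ^ Module.finrank (ZMod 2) (LinearMap.range L) := by
        rw [hcard]
    _ = 2 ^ Module.finrank (ZMod 2) V := by rw [← pow_add, Nat.add_comm, hkr]
    _ = Nat.card V := (hcard V).symm
    _ = Set.ncard (V : Set (MvPolynomial (Fin n) (ZMod 2))) := by
        rw [← Nat.card_coe_set_eq]; rfl
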